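/- Let Delta >= 2 be an integer, let G be a finite simple graph with maximum degree at most Delta, let R >= 1 be an integer, and let K be a real number with K >= 30 * ln(Delta). For each i in {1, ..., R}, form a random edge set H_i by including each edge of G independently with probability p'_i = min(K * 2^i / (4*Delta), 1), where all inclusion events (over all edges and all indices i) are mutually independent, and let H be the union of H_1, ..., H_R. Then for every vertex v of G, the probability that the number of edges of H incident to v exceeds 2*K*2^R is at most Delta^{-10}. -/

import Mathlib

open MeasureTheory ProbabilityTheory

/-- Part (A) of the warm-up lemma: if each edge of a graph `G` of maximum degree at
most `Δ` is included in `H i` independently with probability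
`p'_i = min (K * 2^i / (4Δ)) 1` for `i ∈ {1, …, R}` (all inclusion events mutually
independent) and `H = ⋃ i, H i`, then for every vertex `v` the probability that the
number of edges of `H` incident to `v` exceeds `2K·2^R` is at most `Δ⁻¹⁰`. -/
theorem sparsified_degree_bound
    {V : Type*} [Fintype V] [DecidableEq V]
    (G : SimpleGraph V) [DecidableRel G.Adj]
    (Δ : ℕ) (hΔ : 2 ≤ Δ) (hdeg : ∀ v, G.degree v ≤ Δ)
    (R : ℕ) (hR : 1 ≤ R)
    (K : ℝ) (hK : 30 * Real.log Δ ≤ K)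
    {Ω : Type*} [MeasurableSpace Ω] (μ : Measure Ω) [IsProbabilityMeasure μ]
    (B : (Fin R × G.edgeSet) → Ω → Bool)
    (hmeas : ∀ x, Measurable (B x))
    (hind : iIndepFun B μ)
    (hprob : ∀ x : Fin R × G.edgeSet,
      μ {ω | B x ω = true}
        = ENNReal.ofReal (min (K * 2 ^ ((x.1 : ℕ) + 1) / (4 * Δ)) 1)) :
    ∀ v : V,
      μ {ω | 2 * K * 2 ^ R <
          ((Finset.univ.filter (fun e : G.edgeSet =>
              v ∈ (e : Sym2 V) ∧ ∃ i : Fin R, B (i, e) ω = true)).card : ℝ)}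
        ≤ ((Δ : ENNReal))⁻¹ ^ 10 := by
  intro v
  classical
  have hΔR : (2:ℝ) ≤ (Δ:ℝ) := by exact_mod_cast hΔ
  have hΔ0 : (0:ℝ) < (Δ:ℝ) := by linarith
  have hlog : (0:ℝ) ≤ Real.log Δ := Real.log_nonneg (by linarith)
  have hK0 : (0:ℝ) ≤ K := le_trans (by positivity) hK
  set a : ℝ := 2 * K * 2 ^ R with ha
  -- indicator random variables
  set g : Bool → ℝ := fun b => if b = true then 1 else 0 with hg
  have hgmeas : Measurable g := measurable_from_top
  set X : (Fin R × G.edgeSet) → Ω → ℝ := fun x => g ∘ B x with hX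
  have hXmeas : ∀ x, Measurable (X x) := fun x => hgmeas.comp (hmeas x)
  have hindX : iIndepFun X μ :=
    hind.comp (fun _ => g) (fun _ => hgmeas)
  set T : Finset (Fin R × G.edgeSet) :=
    Finset.univ.filter (fun x => v ∈ (x.2 : Sym2 V)) with hT
  set S : Ω → ℝ := ∑ x ∈ T, X x with hS
  -- probabilities
  set p : (Fin R × G.edgeSet) → ℝ := fun x => (μ {ω | B x ω = true}).toReal with hp
  have hpmin : ∀ x, p x = min (K * 2 ^ ((x.1 : ℕ) + 1) / (4 * Δ)) 1 := by
    intro x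
    show (μ {ω | B x ω = true}).toReal = _
    rw [hprob x, ENNReal.toReal_ofReal]
    exact le_min (by positivity) one_pos.le
  have hp01 : ∀ x, 0 ≤ p x ∧ p x ≤ 1 := by
    intro x
    rw [hpmin x]
    exact ⟨le_min (by positivity) one_pos.le, min_le_right _ _⟩
  -- pointwise rewriting of exp(1 * X x)
  have hkey : ∀ x : Fin R × G.edgeSet,
      (fun ω => Real.exp (1 * X x ω))
        = fun ω => 1 + (Real.exp 1 - 1) * ({ω | B x ω = true}).indicator (fun _ => (1:ℝ)) ω := by
    intro x
    funext ω
    by_cases h : B x ω = true <;>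
      simp [hX, hg, h, Set.indicator_apply, Set.mem_setOf_eq] <;> ring
  have hsmeas : ∀ x, MeasurableSet {ω | B x ω = true} :=
    fun x => (hmeas x) (measurableSet_singleton true)
  have hint : ∀ x, Integrable (fun ω => Real.exp (1 * X x ω)) μ := by
    intro x
    rw [hkey x]
    exact (integrable_const 1).add
      (((integrable_const (1:ℝ)).indicator (hsmeas x)).const_mul _)
  have hmgf : ∀ x, mgf (X x) μ 1 = 1 + (Real.exp 1 - 1) * p x := by
    intro x
    rw [mgf, hkey x, integral_add (integrable_const 1)
      (((integrable_const (1:ℝ)).indicator (hsmeas x)).const_mul _),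
      integral_const, integral_const_mul, integral_indicator_const _ (hsmeas x)]
    simp [hp, measureReal_def]
  -- Chernoff
  have hintS : Integrable (fun ω => Real.exp (1 * S ω)) μ := by
    rw [hS]
    exact hindX.integrable_exp_mul_sum hXmeas (fun x _ => hint x)
  have hcher := measure_ge_le_exp_mul_mgf (μ := μ) (X := S) (t := 1) a zero_le_one hintS
  have hmgfS : mgf S μ 1 = ∏ x ∈ T, mgf (X x) μ 1 := hindX.mgf_sum hXmeas T
  -- sum of probabilities bound
  have hcard : (T.filter (fun _ => True)).card = T.card := by simp
  have hIcard : (Finset.univ.filter (fun e : G.edgeSet => v ∈ (e : Sym2 V))).card ≤ Δ := by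
    calc (Finset.univ.filter (fun e : G.edgeSet => v ∈ (e : Sym2 V))).card
        ≤ (G.incidenceFinset v).card := by
          refine Finset.card_le_card_of_injOn (fun e : G.edgeSet => (e : Sym2 V)) ?_ ?_
          · intro e he
            rw [Finset.mem_coe, Finset.mem_filter] at he
            rw [Finset.mem_coe, SimpleGraph.mem_incidenceFinset]
            exact ⟨e.2, he.2⟩
          · intro e _ e' _ h
            exact Subtype.ext h
      _ = G.degree v := SimpleGraph.card_incidenceFinset_eq_degree G v
      _ ≤ Δ := hdeg v
  have hPsum : ∑ x ∈ T, p x ≤ K * 2 ^ R / 2 := by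
    have hTprod : T = (Finset.univ : Finset (Fin R)) ×ˢ
        (Finset.univ.filter (fun e : G.edgeSet => v ∈ (e : Sym2 V))) := by
      ext x
      simp [hT, Finset.mem_product]
    rw [hTprod, Finset.sum_product]
    calc ∑ i : Fin R, ∑ e ∈ Finset.univ.filter (fun e : G.edgeSet => v ∈ (e : Sym2 V)),
          p (i, e)
        ≤ ∑ i : Fin R, ∑ _e ∈ Finset.univ.filter (fun e : G.edgeSet => v ∈ (e : Sym2 V)),
          K * 2 ^ ((i : ℕ) + 1) / (4 * Δ) := by
          apply Finset.sum_le_sum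
          intro i _
          apply Finset.sum_le_sum
          intro e _
          rw [hpmin (i, e)]
          exact min_le_left _ _
      _ = ∑ i : Fin R,
          ((Finset.univ.filter (fun e : G.edgeSet => v ∈ (e : Sym2 V))).card : ℝ)
            * (K * 2 ^ ((i : ℕ) + 1) / (4 * Δ)) := by
          simp [Finset.sum_const, nsmul_eq_mul]
      _ ≤ ∑ i : Fin R, (Δ : ℝ) * (K * 2 ^ ((i : ℕ) + 1) / (4 * Δ)) := by
          apply Finset.sum_le_sum
          intro i _
          apply mul_le_mul_of_nonneg_right _ (by positivity)
          exact_mod_cast hIcard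
      _ = ∑ i : Fin R, K * 2 ^ ((i : ℕ) + 1) / 4 := by
          apply Finset.sum_congr rfl
          intro i _
          field_simp
      _ = (K / 4) * (2 * ∑ i ∈ Finset.range R, (2:ℝ) ^ i) := by
          rw [Fin.sum_univ_eq_sum_range (fun i => K * 2 ^ (i + 1) / 4),
            Finset.mul_sum, Finset.mul_sum]
          exact Finset.sum_congr rfl fun i _ => by ring
      _ = (K / 4) * (2 * ((2:ℝ) ^ R - 1)) := by
          rw [geom_sum_eq (by norm_num : (2:ℝ) ≠ 1)]
          norm_num
      _ ≤ K * 2 ^ R / 2 := by nlinarith [pow_pos (by norm_num : (0:ℝ) < 2) R]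
  -- bound the mgf product
  have hmgfbound : mgf S μ 1 ≤ Real.exp ((Real.exp 1 - 1) * (K * 2 ^ R / 2)) := by
    rw [hmgfS]
    have h1 : ∀ x ∈ T, mgf (X x) μ 1 ≤ Real.exp ((Real.exp 1 - 1) * p x) := by
      intro x _
      rw [hmgf x]
      have := Real.add_one_le_exp ((Real.exp 1 - 1) * p x)
      linarith
    calc ∏ x ∈ T, mgf (X x) μ 1
        ≤ ∏ x ∈ T, Real.exp ((Real.exp 1 - 1) * p x) := by
          apply Finset.prod_le_prod
          · intro x _
            rw [hmgf x]
            have := (hp01 x).1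
            have he1 : (1:ℝ) ≤ Real.exp 1 := by
              have := Real.add_one_le_exp (1:ℝ); linarith
            nlinarith
          · exact h1
      _ = Real.exp (∑ x ∈ T, (Real.exp 1 - 1) * p x) := by
          rw [Real.exp_sum]
      _ ≤ Real.exp ((Real.exp 1 - 1) * (K * 2 ^ R / 2)) := by
          apply Real.exp_le_exp.mpr
          rw [← Finset.mul_sum]
          apply mul_le_mul_of_nonneg_left hPsum
          have := Real.add_one_le_exp (1:ℝ); linarith
  -- the real-valued tail bound
  have hreal : (μ {ω | a ≤ S ω}).toReal ≤ ((Δ:ℝ)⁻¹) ^ 10 := by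
    have he3 : Real.exp 1 ≤ 3 := le_of_lt (lt_trans Real.exp_one_lt_d9 (by norm_num))
    have hexp : Real.exp (-1 * a) * mgf S μ 1 ≤ Real.exp (-(10 * Real.log Δ)) := by
      calc Real.exp (-1 * a) * mgf S μ 1
          ≤ Real.exp (-1 * a) * Real.exp ((Real.exp 1 - 1) * (K * 2 ^ R / 2)) := by
            exact mul_le_mul_of_nonneg_left hmgfbound (Real.exp_pos _).le
        _ = Real.exp (-a + (Real.exp 1 - 1) * (K * 2 ^ R / 2)) := by
            rw [← Real.exp_add]; ring_nf
        _ ≤ Real.exp (-(10 * Real.log Δ)) := by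
            apply Real.exp_le_exp.mpr
            have h2R : (2:ℝ) ≤ 2 ^ R := by
              calc (2:ℝ) = 2 ^ 1 := by norm_num
                _ ≤ 2 ^ R := pow_le_pow_right₀ (by norm_num) hR
            have hKp : (0:ℝ) ≤ K * 2 ^ R := by positivity
            have : -a + (Real.exp 1 - 1) * (K * 2 ^ R / 2) ≤ -(K * 2 ^ R) := by
              rw [ha]; nlinarith
            have h2 : -(K * 2 ^ R) ≤ -(2 * K) := by nlinarith
            have h3 : -(2 * K) ≤ -(60 * Real.log Δ) := by linarith
            linarith
    have hfin : Real.exp (-(10 * Real.log Δ)) = ((Δ:ℝ)⁻¹) ^ 10 := by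
      rw [show -(10 * Real.log Δ) = Real.log (((Δ:ℝ)⁻¹) ^ 10) by
        rw [Real.log_pow, Real.log_inv]; push_cast; ring]
      exact Real.exp_log (by positivity)
    linarith [hcher, hfin ▸ hexp, measureReal_def (μ := μ) {ω | a ≤ S ω}]
  -- event inclusion
  have hsub : {ω | a < ((Finset.univ.filter (fun e : G.edgeSet =>
        v ∈ (e : Sym2 V) ∧ ∃ i : Fin R, B (i, e) ω = true)).card : ℝ)}
      ⊆ {ω | a ≤ S ω} := by
    intro ω hω
    simp only [Set.mem_setOf_eq] at hω ⊢
    have hcount : S ω = ((T.filter (fun x => B x ω = true)).card : ℝ) := by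
      rw [hS]
      simp only [Finset.sum_apply, hX, hg, Function.comp_apply]
      rw [Finset.sum_boole]
    have hle : (Finset.univ.filter (fun e : G.edgeSet =>
        v ∈ (e : Sym2 V) ∧ ∃ i : Fin R, B (i, e) ω = true)).card
        ≤ (T.filter (fun x => B x ω = true)).card := by
      apply Finset.card_le_card_of_injOn
        (fun e => ((if h : ∃ i : Fin R, B (i, e) ω = true then h.choose
          else ⟨0, hR⟩ : Fin R), e))
      · intro e he
        rw [Finset.mem_coe, Finset.mem_filter] at he
        obtain ⟨-, hv, hex⟩ := he
        beta_reduce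
        rw [dif_pos hex]
        rw [Finset.mem_coe, Finset.mem_filter, hT, Finset.mem_filter]
        exact ⟨⟨Finset.mem_univ _, hv⟩, hex.choose_spec⟩
      · intro e _ e' _ h
        exact congrArg Prod.snd h
    rw [hcount]
    exact le_of_lt (lt_of_lt_of_le hω (by exact_mod_cast hle))
  calc μ _ ≤ μ {ω | a ≤ S ω} := measure_mono hsub
    _ = ENNReal.ofReal ((μ {ω | a ≤ S ω}).toReal) :=
        (ENNReal.ofReal_toReal (measure_ne_top μ _)).symm
    _ ≤ ENNReal.ofReal (((Δ:ℝ)⁻¹) ^ 10) := ENNReal.ofReal_le_ofReal hreal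
    _ = ((Δ : ENNReal))⁻¹ ^ 10 := by
        rw [ENNReal.ofReal_pow (by positivity), ENNReal.ofReal_inv_of_pos hΔ0,
          ENNReal.ofReal_natCast]
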